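/- (Explicit solution of the algebraic system.) For every real number c > 1, the system of equations x²(1 − 2y) − 2x(1 + y) + 1 = 0 and (1 + y) − x(1 − 2y) = c·y·(x + 1) has a unique solution (x,y) ∈ (0,1) × (0,∞), given explicitly by x = ( √(4c² − 4c + 9) − 3 ) / (2c) and y = (1 − x)² / ( 2x(1 + x) ). -/

import Mathlib

/-- Explicit solution of the algebraic system: for every real `c > 1`, the system
`x²(1 - 2y) - 2x(1 + y) + 1 = 0` and `(1 + y) - x(1 - 2y) = c·y·(x + 1)` has a unique
solution `(x,y) ∈ (0,1) × (0,∞)`, given by `x = (√(4c² - 4c + 9) - 3)/(2c)` and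
`y = (1 - x)²/(2x(1 + x))`. -/
theorem algebraic_system_solution (c : ℝ) (hc : 1 < c) :
    ∀ x y : ℝ,
      (x ∈ Set.Ioo (0:ℝ) 1 ∧ 0 < y ∧
        x ^ 2 * (1 - 2 * y) - 2 * x * (1 + y) + 1 = 0 ∧
        (1 + y) - x * (1 - 2 * y) = c * y * (x + 1)) ↔
      (x = (Real.sqrt (4 * c ^ 2 - 4 * c + 9) - 3) / (2 * c) ∧
        y = (1 - x) ^ 2 / (2 * x * (1 + x))) := by
  have hc0 : (0:ℝ) < c := by linarith
  set s := Real.sqrt (4 * c ^ 2 - 4 * c + 9) with hs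
  have hsnn : 0 ≤ s := Real.sqrt_nonneg _
  have hs2 : s ^ 2 = 4 * c ^ 2 - 4 * c + 9 := by
    rw [hs, Real.sq_sqrt]; nlinarith
  have hs3 : 3 < s := by nlinarith
  have hslt : s < 2 * c + 3 := by nlinarith
  intro x y
  constructor
  · rintro ⟨⟨hx0, hx1⟩, hy, h1, h2⟩
    have hx1' : (1:ℝ) - x ≠ 0 := by linarith
    have key : (1 - x) ^ 2 = 2 * y * x * (1 + x) := by linear_combination h1
    have key3 : (1 - x) * (c * x ^ 2 + 3 * x + 1 - c) = 0 := by
      linear_combination 2 * x * (1 + x) * h2 + ((1 + 2 * x) - c * (x + 1)) * key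
    have quad : c * x ^ 2 + 3 * x + 1 - c = 0 := by
      rcases mul_eq_zero.mp key3 with h | h
      · exact absurd h hx1'
      · exact h
    have hsq : (2 * c * x + 3 - s) * (2 * c * x + 3 + s) = 0 := by
      linear_combination 4 * c * quad - hs2
    have hxs : 2 * c * x + 3 = s := by
      rcases mul_eq_zero.mp hsq with h | h
      · linarith
      · nlinarith
    constructor
    · field_simp
      linarith
    · rw [eq_div_iff (by positivity)]
      linear_combination -key
  · rintro ⟨hx, hy⟩
    have hx0 : 0 < x := by rw [hx]; apply div_pos <;> linarith
    have hx1 : x < 1 := by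
      rw [hx, div_lt_one (by positivity)]; linarith
    have hxs : 2 * c * x + 3 = s := by
      rw [hx]; field_simp; ring
    have quad : c * x ^ 2 + 3 * x + 1 - c = 0 := by
      nlinarith [hxs, hs2]
    have hy0 : 0 < y := by rw [hy]; apply div_pos <;> nlinarith
    have key : (1 - x) ^ 2 = 2 * y * x * (1 + x) := by
      rw [hy]; field_simp
    refine ⟨⟨hx0, hx1⟩, hy0, by linear_combination key, ?_⟩
    have hden : (2 * x * (1 + x)) ≠ 0 := by positivity
    have h2 : 2 * x * (1 + x) * ((1 + y) - x * (1 - 2 * y) - c * y * (x + 1)) = 0 := by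
      linear_combination (1 - x) * quad - ((1 + 2 * x) - c * (x + 1)) * key
    have := mul_eq_zero.mp h2
    rcases this with h | h
    · exact absurd h hden
    · linarith
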